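/- For positive integers l and ω₁, one has the identity Σ_{k=0}^{ω₁} C(ω₁,k) · [(lk)!/(l!)^k] · [(l(ω₁-k))!/(l!)^{ω₁-k}] · [(lω₁-1)!/((lk-1)!·(l(ω₁-k))!)] = 2^{ω₁-1}·(lω₁)!/(l!)^{ω₁}, where the term with k=0 is interpreted as 0 (since (lk-1)! is undefined / the count of shuffles beginning with letter 1 is 0 when the first factor is empty). -/

import Mathlib

lemma sum_id_mul_choose (n : ℕ) (hn : 0 < n) :
    ∑ k ∈ Finset.Icc 1 n, k * n.choose k = n * 2 ^ (n - 1) := by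
  obtain ⟨m, rfl⟩ := Nat.exists_eq_add_of_lt hn
  simp only [Nat.zero_add, Nat.add_sub_cancel]
  rw [show Finset.Icc 1 (m + 1) = Finset.map ⟨fun j => j + 1, add_left_injective 1⟩
      (Finset.range (m + 1)) by
    ext x
    simp only [Finset.mem_Icc, Finset.mem_map, Finset.mem_range, Function.Embedding.coeFn_mk]
    exact ⟨fun ⟨h1, h2⟩ => ⟨x - 1, by omega, by omega⟩, fun ⟨a, ha, he⟩ => by omega⟩]
  rw [Finset.sum_map]
  have : ∀ j, (j + 1) * (m + 1).choose (j + 1) = (m + 1) * m.choose j := by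
    intro j
    rw [mul_comm]
    exact (Nat.add_one_mul_choose_eq m j).symm
  simp only [Function.Embedding.coeFn_mk, this]
  rw [← Finset.mul_sum, Nat.sum_range_choose]

/-- For positive integers `l` and `ω₁`,
`Σ_{k=1}^{ω₁} C(ω₁,k)·(lk)!/(l!)^k·(l(ω₁-k))!/(l!)^{ω₁-k}·(lω₁-1)!/((lk-1)!(l(ω₁-k))!)
  = 2^{ω₁-1}·(lω₁)!/(l!)^{ω₁}`
(the summand for `k = 0` being `0` by convention, so the sum starts at `k = 1`). -/
theorem shuffle_counting_identity (l ω₁ : ℕ) (hl : 0 < l) (hω : 0 < ω₁) :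
    ∑ k ∈ Finset.Icc 1 ω₁,
      (Nat.choose ω₁ k : ℝ)
        * ((Nat.factorial (l * k) : ℝ) / (Nat.factorial l : ℝ) ^ k)
        * ((Nat.factorial (l * (ω₁ - k)) : ℝ) / (Nat.factorial l : ℝ) ^ (ω₁ - k))
        * ((Nat.factorial (l * ω₁ - 1) : ℝ)
            / ((Nat.factorial (l * k - 1) : ℝ) * (Nat.factorial (l * (ω₁ - k)) : ℝ)))
      = 2 ^ (ω₁ - 1) * (Nat.factorial (l * ω₁) : ℝ) / (Nat.factorial l : ℝ) ^ ω₁ := by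
  have hfl : (Nat.factorial l : ℝ) ≠ 0 := Nat.cast_ne_zero.mpr (Nat.factorial_ne_zero l)
  have key : ∀ k ∈ Finset.Icc 1 ω₁,
      (Nat.choose ω₁ k : ℝ)
        * ((Nat.factorial (l * k) : ℝ) / (Nat.factorial l : ℝ) ^ k)
        * ((Nat.factorial (l * (ω₁ - k)) : ℝ) / (Nat.factorial l : ℝ) ^ (ω₁ - k))
        * ((Nat.factorial (l * ω₁ - 1) : ℝ)
            / ((Nat.factorial (l * k - 1) : ℝ) * (Nat.factorial (l * (ω₁ - k)) : ℝ)))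
      = ((k * Nat.choose ω₁ k : ℕ) : ℝ)
          * ((l : ℝ) * (Nat.factorial (l * ω₁ - 1) : ℝ) / (Nat.factorial l : ℝ) ^ ω₁) := by
    intro k hk
    simp only [Finset.mem_Icc] at hk
    have hk1 : 1 ≤ k := hk.1
    have hk2 : k ≤ ω₁ := hk.2
    have hlk : 0 < l * k := Nat.mul_pos hl hk1
    have h1 : ((l * k).factorial : ℝ) = (l * k : ℕ) * ((l * k - 1).factorial : ℝ) := by
      rw [← Nat.mul_factorial_pred hlk.ne']; push_cast; ring
    have hpow : (Nat.factorial l : ℝ) ^ k * (Nat.factorial l : ℝ) ^ (ω₁ - k)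
        = (Nat.factorial l : ℝ) ^ ω₁ := by
      rw [← pow_add]; congr 1; omega
    have hne1 : ((l * k - 1).factorial : ℝ) ≠ 0 :=
      Nat.cast_ne_zero.mpr (Nat.factorial_ne_zero _)
    have hne2 : ((l * (ω₁ - k)).factorial : ℝ) ≠ 0 :=
      Nat.cast_ne_zero.mpr (Nat.factorial_ne_zero _)
    rw [h1]
    field_simp
    rw [← hpow]
    push_cast
    ring
  rw [Finset.sum_congr rfl key, ← Finset.sum_mul, ← Nat.cast_sum,
    sum_id_mul_choose ω₁ hω]
  have h2 : ((l * ω₁).factorial : ℝ) = (l * ω₁ : ℕ) * ((l * ω₁ - 1).factorial : ℝ) := by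
    rw [← Nat.mul_factorial_pred (Nat.mul_pos hl hω).ne']; push_cast; ring
  rw [h2]
  push_cast
  ring
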